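/- Let n ≥ 1 and assume the step ratios satisfy 0 < r_k < (3+√17)/2 for 2 ≤ k ≤ n. Let B̃₂ be the n×n real lower bidiagonal matrix whose k-th diagonal entry is (1+2r_k)/(1+r_k) and whose k-th subdiagonal entry (row k, column k−1) is −r_k^{3/2}/(1+r_k), where r_1 := 0. Then the real symmetric matrix B̃ := B̃₂ + B̃₂ᵀ is positive definite. -/

import Mathlib

open Finset Matrix

/-- The `m × m` lower bidiagonal matrix `B̃₂` with `k`-th diagonal entry
`(1+2r_k)/(1+r_k)` and `k`-th subdiagonal entry `−r_k^{3/2}/(1+r_k)`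
(rows/columns `0,…,m−1` correspond to `k = 1,…,m`). -/
noncomputable def Bt2 (r : ℕ → ℝ) (m : ℕ) : Matrix (Fin m) (Fin m) ℝ :=
  Matrix.of fun k j =>
    if (k : ℕ) = (j : ℕ) then
      (1 + 2 * r ((k : ℕ) + 1)) / (1 + r ((k : ℕ) + 1))
    else if (j : ℕ) + 1 = (k : ℕ) then
      -(r ((k : ℕ) + 1) * Real.sqrt (r ((k : ℕ) + 1))) / (1 + r ((k : ℕ) + 1))
    else 0

/-- diagonal entry of `B̃₂`. -/
noncomputable def dd (r : ℕ → ℝ) (k : ℕ) : ℝ := (1 + 2 * r (k + 1)) / (1 + r (k + 1))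

/-- (negated) subdiagonal entry of `B̃₂`. -/
noncomputable def ee (r : ℕ → ℝ) (k : ℕ) : ℝ :=
  r (k + 1) * Real.sqrt (r (k + 1)) / (1 + r (k + 1))

noncomputable def aa (r : ℕ → ℝ) (k : ℕ) : ℝ := 7 / 5 * r (k + 1) / (1 + r (k + 1))

noncomputable def bb (r : ℕ → ℝ) (k : ℕ) : ℝ := 5 / 7 * r (k + 1) ^ 2 / (1 + r (k + 1))

lemma coupling_aux (s X Y : ℝ) (hs : 0 < s) :
    2 * (s * Real.sqrt s / (1 + s)) * X * Y ≤
      7 / 5 * s / (1 + s) * X ^ 2 + 5 / 7 * s ^ 2 / (1 + s) * Y ^ 2 := by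
  have h1 : (0:ℝ) < 1 + s := by linarith
  have hu2 : Real.sqrt s ^ 2 = s := Real.sq_sqrt hs.le
  have expand : s * (7 * X - 5 * Real.sqrt s * Y) ^ 2
      = 49 * s * X ^ 2 - 70 * (s * Real.sqrt s) * X * Y + 25 * s ^ 2 * Y ^ 2 := by
    linear_combination (25 * s * Y ^ 2) * hu2
  have key : 2 * (s * Real.sqrt s) * X * Y ≤ 7/5 * s * X ^ 2 + 5/7 * s ^ 2 * Y ^ 2 := by
    nlinarith [mul_nonneg hs.le (sq_nonneg (7 * X - 5 * Real.sqrt s * Y)), expand]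
  have e1 : 2 * (s * Real.sqrt s / (1 + s)) * X * Y
      = (2 * (s * Real.sqrt s) * X * Y) / (1 + s) := by ring
  have e2 : 7/5 * s / (1 + s) * X ^ 2 + 5/7 * s ^ 2 / (1 + s) * Y ^ 2
      = (7/5 * s * X ^ 2 + 5/7 * s ^ 2 * Y ^ 2) / (1 + s) := by ring
  rw [e1, e2]
  gcongr

lemma bb_aux (s : ℝ) (h0 : 0 < s) (h1 : s < (3 + Real.sqrt 17) / 2) :
    5 / 7 * s ^ 2 / (1 + s) < 2 := by
  have hsq : Real.sqrt 17 ^ 2 = 17 := Real.sq_sqrt (by norm_num)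
  have hnn : (0:ℝ) ≤ Real.sqrt 17 := Real.sqrt_nonneg 17
  have h5 : Real.sqrt 17 < 5 := by nlinarith
  have h4 : (4:ℝ) < Real.sqrt 17 := by nlinarith
  have hps : (0:ℝ) < 1 + s := by linarith
  rw [div_lt_iff₀ hps]
  nlinarith [mul_pos (sub_pos.mpr h1) h0,
    mul_nonneg (sub_pos.mpr h1).le
      (show (0:ℝ) ≤ 5 * ((3 + Real.sqrt 17) / 2) - 14 by nlinarith)]

lemma dd_aux (s : ℝ) (h0 : 0 ≤ s) :
    2 ≤ 2 * ((1 + 2 * s) / (1 + s)) - 7 / 5 * s / (1 + s) := by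
  have hps : (0:ℝ) < 1 + s := by linarith
  have h : 2 * ((1 + 2 * s) / (1 + s)) - 7 / 5 * s / (1 + s) - 2 = (3 / 5 * s) / (1 + s) := by
    field_simp; ring
  have h2 := div_nonneg (by linarith : (0:ℝ) ≤ 3 / 5 * s) hps.le
  linarith

theorem stmt7 (n : ℕ) (hn : 1 ≤ n) (τ r : ℕ → ℝ)
    (hτ : ∀ k, 1 ≤ k → k ≤ n → 0 < τ k)
    (hr1 : r 1 = 0)
    (hr : ∀ k, 2 ≤ k → k ≤ n → r k = τ k / τ (k - 1))
    (hratio : ∀ k, 2 ≤ k → k ≤ n → 0 < r k ∧ r k < (3 + Real.sqrt 17) / 2) :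
    (Bt2 r n + (Bt2 r n)ᵀ).PosDef := by
  obtain ⟨m, rfl⟩ : ∃ m, n = m + 1 := ⟨n - 1, (Nat.succ_pred_eq_of_pos hn).symm⟩
  refine Matrix.PosDef.of_dotProduct_mulVec_pos ?_ ?_
  · have := Matrix.isHermitian_add_transpose_self (Bt2 r (m + 1))
    simpa using this
  intro x hx
  have hstar : star x = x := rfl
  rw [hstar]
  set B := Bt2 r (m + 1) with hB
  -- the extended vector
  set y : ℕ → ℝ := fun i => if h : i < m + 1 then x ⟨i, h⟩ else 0 with hy
  have hxy : ∀ i : Fin (m + 1), x i = y (i : ℕ) := by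
    intro i; simp [hy, i.isLt, Nat.lt_succ_iff.mp i.isLt]
  -- the matrix-vector product, entrywise
  have hBx : ∀ k : Fin (m + 1),
      (B *ᵥ x) k = dd r (k : ℕ) * y (k : ℕ) - ee r (k : ℕ) * y ((k : ℕ) - 1) := by
    intro k
    have hsum : (B *ᵥ x) k = ∑ j : Fin (m + 1), B k j * x j := by
      simp [Matrix.mulVec, dotProduct]
    have hsplit : ∀ j : Fin (m + 1), B k j * x j =
        (if k = j then dd r (k : ℕ) * x j else 0) +
          (if (j : ℕ) + 1 = (k : ℕ) then -(ee r (k : ℕ)) * x j else 0) := by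
      intro j
      rcases eq_or_ne ((k : ℕ)) ((j : ℕ)) with h | h
      · have h2 : ¬((j : ℕ) + 1 = (k : ℕ)) := by omega
        have hkj : k = j := Fin.ext h
        simp [hB, Bt2, dd, h, h2, hkj]
      · have hkj : k ≠ j := fun e => h (by rw [e])
        simp only [hB, Bt2, Matrix.of_apply, if_neg h, if_neg hkj, zero_add]
        split_ifs with h2
        · simp [ee]; ring
        · simp
    rw [hsum, Finset.sum_congr rfl fun j _ => hsplit j, Finset.sum_add_distrib]
    have h1 : ∑ j : Fin (m + 1), (if k = j then dd r (k : ℕ) * x j else 0)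
        = dd r (k : ℕ) * x k := by
      simp [Finset.sum_ite_eq]
    rw [h1]
    rcases Nat.eq_zero_or_pos (k : ℕ) with hk0 | hkpos
    · have h2 : ∀ j : Fin (m + 1), (if (j : ℕ) + 1 = (k : ℕ) then -(ee r (k : ℕ)) * x j else 0) = 0 := by
        intro j; rw [if_neg]; omega
      have hee : ee r (k : ℕ) = 0 := by simp [ee, hk0, hr1]
      rw [Finset.sum_congr rfl fun j _ => h2 j]
      simp [hee, hxy k]
    · have hp : (k : ℕ) - 1 < m + 1 := by omega
      set j0 : Fin (m + 1) := ⟨(k : ℕ) - 1, hp⟩ with hj0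
      have hj0v : (j0 : ℕ) = (k : ℕ) - 1 := rfl
      have h2 : ∑ j : Fin (m + 1), (if (j : ℕ) + 1 = (k : ℕ) then -(ee r (k : ℕ)) * x j else 0)
          = -(ee r (k : ℕ)) * x j0 := by
        rw [Finset.sum_eq_single j0]
        · rw [if_pos (by omega : (j0 : ℕ) + 1 = (k : ℕ))]
        · intro j _ hne
          rw [if_neg]
          intro hc
          exact hne (Fin.ext (by omega))
        · intro habs; exact absurd (Finset.mem_univ j0) habs
      rw [h2]
      have : x j0 = y ((k : ℕ) - 1) := by simp [hy, hj0, hp]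
      rw [this, hxy k]
      ring
  -- quadratic form
  have hform : x ⬝ᵥ ((B + Bᵀ) *ᵥ x)
      = ∑ i ∈ Finset.range (m + 1),
          (2 * dd r i * y i ^ 2 - 2 * ee r i * y i * y (i - 1)) := by
    rw [Matrix.add_mulVec, dotProduct_add,
      show x ⬝ᵥ (Bᵀ *ᵥ x) = x ⬝ᵥ (B *ᵥ x) by
        rw [Matrix.mulVec_transpose, dotProduct_comm, dotProduct_mulVec]]
    have hhalf : x ⬝ᵥ (B *ᵥ x)
        = ∑ i ∈ Finset.range (m + 1), (dd r i * y i ^ 2 - ee r i * y i * y (i - 1)) := by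
      have e1 : x ⬝ᵥ (B *ᵥ x) = ∑ i : Fin (m + 1),
          (fun t : ℕ => dd r t * y t ^ 2 - ee r t * y t * y (t - 1)) (i : ℕ) := by
        rw [dotProduct]
        refine Finset.sum_congr rfl fun i _ => ?_
        rw [hBx i, hxy i]
        ring
      rw [e1]
      exact Fin.sum_univ_eq_sum_range (fun t => dd r t * y t ^ 2 - ee r t * y t * y (t - 1)) (m + 1)
    rw [hhalf, ← two_mul, Finset.mul_sum]
    exact Finset.sum_congr rfl fun i _ => by ring
  -- per-index bound
  have hstep : ∀ i ∈ Finset.range (m + 1),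
      (2 * dd r i - aa r i) * y i ^ 2 - bb r i * y (i - 1) ^ 2
        ≤ 2 * dd r i * y i ^ 2 - 2 * ee r i * y i * y (i - 1) := by
    intro i hi
    rcases Nat.eq_zero_or_pos i with rfl | hip
    · simp [ee, aa, bb, hr1]
    · have hin : i + 1 ≤ m + 1 := Finset.mem_range.mp hi
      obtain ⟨hpos, _⟩ := hratio (i + 1) (by omega) hin
      have hc := coupling_aux (r (i + 1)) (y i) (y (i - 1)) hpos
      simp only [dd, ee, aa, bb] at *
      nlinarith [hc]
  -- coefficient
  set C : ℕ → ℝ := fun i =>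
    (2 * dd r i - aa r i) - (if i < m then bb r (i + 1) else 0) with hCdef
  have hshift : ∑ i ∈ Finset.range (m + 1), bb r i * y (i - 1) ^ 2
      = ∑ i ∈ Finset.range (m + 1), (if i < m then bb r (i + 1) else 0) * y i ^ 2 := by
    rw [Finset.sum_range_succ' (fun i => bb r i * y (i - 1) ^ 2) m,
      Finset.sum_range_succ]
    have hb0 : bb r 0 * y (0 - 1) ^ 2 = 0 := by simp [bb, hr1]
    rw [hb0, if_neg (lt_irrefl m)]
    simp only [Nat.add_sub_cancel, zero_mul, add_zero]
    exact Finset.sum_congr rfl fun i hi => by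
      rw [if_pos (Finset.mem_range.mp hi)]
  have hsum : ∑ i ∈ Finset.range (m + 1),
      ((2 * dd r i - aa r i) * y i ^ 2 - bb r i * y (i - 1) ^ 2)
      = ∑ i ∈ Finset.range (m + 1), C i * y i ^ 2 := by
    rw [Finset.sum_sub_distrib, hshift, ← Finset.sum_sub_distrib]
    exact Finset.sum_congr rfl fun i _ => by simp only [hCdef]; ring
  -- positivity of coefficients
  have hC : ∀ i, i < m + 1 → 0 < C i := by
    intro i hi
    have hge : 2 ≤ 2 * dd r i - aa r i := by
      rcases Nat.eq_zero_or_pos i with rfl | hip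
      · norm_num [dd, aa, hr1]
      · have hin : i + 1 ≤ m + 1 := hi
        have h0 := (hratio (i + 1) (by omega) hin).1.le
        have := dd_aux (r (i + 1)) h0
        simp only [dd, aa]
        linarith
    rcases lt_or_ge i m with him | him
    · have h2 : 2 ≤ i + 2 := by omega
      have h2' : i + 2 ≤ m + 1 := by omega
      obtain ⟨hp, hl⟩ := hratio (i + 2) h2 h2'
      have hbb := bb_aux (r (i + 2)) hp hl
      simp only [hCdef, if_pos him, bb]
      have : r (i + 1 + 1) = r (i + 2) := by ring_nf
      rw [this]
      linarith
    · simp only [hCdef, if_neg (by omega : ¬ i < m)]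
      linarith
  -- nonzero coordinate
  obtain ⟨k0, hk0⟩ := Function.ne_iff.mp hx
  have hy0 : y (k0 : ℕ) ≠ 0 := by rw [← hxy k0]; exact hk0
  have hpos : 0 < ∑ i ∈ Finset.range (m + 1), C i * y i ^ 2 := by
    apply Finset.sum_pos'
    · intro i hi
      exact mul_nonneg (hC i (Finset.mem_range.mp hi)).le (sq_nonneg _)
    · refine ⟨(k0 : ℕ), Finset.mem_range.mpr k0.isLt, ?_⟩
      have hsq : 0 < y (k0 : ℕ) ^ 2 :=
        lt_of_le_of_ne (sq_nonneg _) (Ne.symm (pow_ne_zero 2 hy0))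
      exact mul_pos (hC _ k0.isLt) hsq
  calc (0:ℝ) < ∑ i ∈ Finset.range (m + 1), C i * y i ^ 2 := hpos
    _ = ∑ i ∈ Finset.range (m + 1),
          ((2 * dd r i - aa r i) * y i ^ 2 - bb r i * y (i - 1) ^ 2) := hsum.symm
    _ ≤ ∑ i ∈ Finset.range (m + 1),
          (2 * dd r i * y i ^ 2 - 2 * ee r i * y i * y (i - 1)) :=
        Finset.sum_le_sum hstep
    _ = x ⬝ᵥ ((B + Bᵀ) *ᵥ x) := hform.symm
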